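/- Let G be a connected d-regular finite simple undirected graph on vertex set {1,…,N} (d ≥ 1) with adjacency matrix A, and let p ∈ [0,1]. Then the rank of the matrix (d + 1 − p)·I − p·A − ((1−p)/d)·A − ((1−p)/d)·A² equals N − 1. -/

import Mathlib

open Matrix

open Finset in
/-- For a connected `d`-regular graph (`d ≥ 1`) and `p ∈ [0,1]`, the rank of
`(d + 1 − p)·I − p·A − ((1−p)/d)·A − ((1−p)/d)·A²` equals `N − 1`. -/
theorem stmt_12 (N d : ℕ) (hd : 1 ≤ d) (G : SimpleGraph (Fin N)) [DecidableRel G.Adj]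
    (hconn : G.Connected) (hreg : G.IsRegularOfDegree d)
    (p : ℝ) (hp0 : 0 ≤ p) (hp1 : p ≤ 1) :
    (((d : ℝ) + 1 - p) • (1 : Matrix (Fin N) (Fin N) ℝ) - p • G.adjMatrix ℝ
      - ((1 - p) / (d : ℝ)) • G.adjMatrix ℝ
      - ((1 - p) / (d : ℝ)) • (G.adjMatrix ℝ) ^ 2).rank = N - 1 := by
  have hd0 : (0:ℝ) < d := by exact_mod_cast hd
  have hd1 : (1:ℝ) ≤ d := by exact_mod_cast hd
  set A : Matrix (Fin N) (Fin N) ℝ := G.adjMatrix ℝ with hA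
  obtain ⟨c, hc⟩ : ∃ c : ℝ, (1 - p) / (d:ℝ) = c := ⟨_, rfl⟩
  rw [hc]
  have hcd : (d:ℝ) * c = 1 - p := by rw [← hc]; field_simp
  have hc0 : 0 ≤ c := by rw [← hc]; exact div_nonneg (by linarith) hd0.le
  -- lapMatrix = d • 1 - A
  have hL : G.lapMatrix ℝ = (d:ℝ) • 1 - A := by
    unfold SimpleGraph.lapMatrix SimpleGraph.degMatrix
    rw [smul_one_eq_diagonal]
    have : (fun v : Fin N => (G.degree v : ℝ)) = fun _ => (d:ℝ) := by
      funext v; rw [hreg v]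
    rw [this]
  -- signless Laplacian PSD
  have hS : PosSemidef ((d:ℝ) • 1 + A) := by
    rw [posSemidef_iff_dotProduct_mulVec]
    constructor
    · rw [IsHermitian, conjTranspose_eq_transpose_of_trivial]
      show ((d:ℝ) • 1 + A)ᵀ = _
      rw [transpose_add, transpose_smul, transpose_one, (G.isSymm_adjMatrix).eq]
    · intro x
      rw [star_trivial]
      have hexp : x ⬝ᵥ (((d:ℝ) • 1 + A) *ᵥ x)
          = (d:ℝ) * (∑ i, x i * x i) + ∑ i, ∑ j, if G.Adj i j then x i * x j else 0 := by
        rw [add_mulVec, dotProduct_add, smul_mulVec, one_mulVec, dotProduct_smul,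
          smul_eq_mul, SimpleGraph.dotProduct_mulVec_adjMatrix]
        rfl
      have hsq : ∀ (f : Fin N → ℝ) , ∀ i, ∑ j, (if G.Adj i j then f i else 0) = (d:ℝ) * f i := by
        intro f i
        have h := SimpleGraph.degree_eq_sum_if_adj (R := ℝ) G i
        rw [hreg i] at h
        calc ∑ j, (if G.Adj i j then f i else 0)
            = (∑ j, if G.Adj i j then (1:ℝ) else 0) * f i := by
              rw [Finset.sum_mul]; simp [ite_mul]
          _ = (d:ℝ) * f i := by rw [← h]
      have e1 : ∑ i : Fin N, ∑ j : Fin N, (if G.Adj i j then x i * x i else 0)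
          = (d:ℝ) * (∑ i, x i * x i) := by
        rw [Finset.mul_sum]
        exact Finset.sum_congr rfl fun i _ => hsq (fun i => x i * x i) i
      have e2 : ∑ i : Fin N, ∑ j : Fin N, (if G.Adj i j then x j * x j else 0)
          = (d:ℝ) * (∑ i, x i * x i) := by
        rw [Finset.sum_comm, Finset.mul_sum]
        refine Finset.sum_congr rfl fun j _ => ?_
        have hcom : ∀ i : Fin N, (if G.Adj i j then x j * x j else 0)
            = (if G.Adj j i then x j * x j else 0) :=
          fun i => if_congr (G.adj_comm i j) rfl rfl
        simp_rw [hcom]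
        exact hsq (fun j => x j * x j) j
      have h2 : 2 * (x ⬝ᵥ (((d:ℝ) • 1 + A) *ᵥ x))
          = ∑ i, ∑ j, if G.Adj i j then (x i + x j)^2 else 0 := by
        have hsplit : ∀ i j : Fin N, (if G.Adj i j then (x i + x j)^2 else 0)
            = ((if G.Adj i j then x i * x i else 0) + (if G.Adj i j then x j * x j else 0))
              + 2 * (if G.Adj i j then x i * x j else 0) := by
          intro i j; split <;> ring
        simp_rw [hsplit]
        simp only [Finset.sum_add_distrib, ← Finset.mul_sum]
        rw [e1, e2, hexp]
        ring
      have hnn : (0:ℝ) ≤ ∑ i, ∑ j, if G.Adj i j then (x i + x j)^2 else 0 :=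
        Finset.sum_nonneg fun i _ => Finset.sum_nonneg fun j _ => by positivity
      linarith [h2, hnn]
  -- B := (1+c) • 1 + c • A is positive definite
  set B : Matrix (Fin N) (Fin N) ℝ := (1 + c) • 1 + c • A with hB
  have hBsplit : B = c • ((d:ℝ) • 1 + A) + ((1 - p + p * d)/d) • 1 := by
    rw [hB, smul_add, smul_smul]
    match_scalars
    · field_simp
      linear_combination (1 - (d:ℝ)) * hcd
    · ring
  have hcPSD : PosSemidef (c • ((d:ℝ) • 1 + A)) := by
    rw [posSemidef_iff_dotProduct_mulVec]
    constructor
    · rw [IsHermitian, conjTranspose_smul]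
      show star c • ((d:ℝ) • 1 + A)ᴴ = _
      rw [hS.1, star_trivial]
    · intro x
      rw [smul_mulVec, dotProduct_smul, smul_eq_mul]
      exact mul_nonneg hc0 (hS.dotProduct_mulVec_nonneg x)
  have hIdPD : PosDef (((1 - p + p * d)/d : ℝ) • (1 : Matrix (Fin N) (Fin N) ℝ)) := by
    rw [smul_one_eq_diagonal]
    refine posDef_diagonal_iff.mpr fun i => ?_
    have hnum : (0:ℝ) < 1 - p + p * d := by nlinarith [mul_le_mul_of_nonneg_left hd1 hp0]
    exact div_pos hnum hd0
  have hBPD : PosDef B := by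
    rw [hBsplit]
    exact Matrix.PosDef.posSemidef_add hcPSD hIdPD
  -- factorization
  have hfac : (((d : ℝ) + 1 - p) • (1 : Matrix (Fin N) (Fin N) ℝ) - p • A
      - c • A - c • A ^ 2) = G.lapMatrix ℝ * B := by
    rw [hL, hB]
    simp only [sub_mul, mul_add, smul_mul_assoc, mul_smul_comm, one_mul, mul_one,
      smul_smul, sq]
    match_scalars
    all_goals first | ring1 | linear_combination hcd | linear_combination -hcd
  rw [hfac, rank_mul_eq_left_of_isUnit_det _ _ (hBPD.det_pos.ne'.isUnit)]
  -- rank of Laplacian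
  have hcard : Fintype.card G.ConnectedComponent = 1 := by
    obtain ⟨v⟩ := hconn.nonempty
    refine Fintype.card_eq_one_iff.mpr ⟨G.connectedComponentMk v, ?_⟩
    intro c'
    refine c'.ind fun w => ?_
    exact SimpleGraph.ConnectedComponent.eq.mpr (hconn.preconnected w v)
  have hker : Module.finrank ℝ (LinearMap.ker (mulVecLin (G.lapMatrix ℝ))) = 1 := by
    have h := G.card_connectedComponent_eq_finrank_ker_toLin'_lapMatrix
    rw [hcard, Matrix.toLin'_apply'] at h
    exact h.symm
  have hrn := LinearMap.finrank_range_add_finrank_ker (mulVecLin (G.lapMatrix ℝ))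
  rw [hker, Module.finrank_fintype_fun_eq_card, Fintype.card_fin] at hrn
  rw [Matrix.rank]
  omega
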